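/- Suppose a + b = c + d. Then for every n ≥ 1 and all real numbers k_1, ..., k_n, the sum of the n-th powers of the entries of x^{(n)} equals the sum of the n-th powers of the entries of y^{(n)}; that is, Σ_{i=1}^{2^n} x_i^n = Σ_{i=1}^{2^n} y_i^n. -/

import Mathlib

/-- The pair of sequences `(x^{(t+1)}, y^{(t+1)})` of length `2^(t+1)` (0-based internal
level `t` corresponds to the paper's level `m = t + 1`).  `(seqXY a b c d k t i).1` is the
`i`-th entry (0-based) of `x^{(t+1)}` and `.2` that of `y^{(t+1)}`. -/
noncomputable def seqXY (a b c d : ℝ) (k : ℕ → ℝ) : ℕ → ℕ → ℝ × ℝ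
  | 0, i => if i = 0 then (a + k 1, c + k 1) else (b + k 1, d + k 1)
  | t + 1, i =>
      if i < 2 ^ (t + 1) then seqXY a b c d k t i
      else ((seqXY a b c d k t (i - 2 ^ (t + 1))).2 + k (t + 2),
            (seqXY a b c d k t (i - 2 ^ (t + 1))).1 + k (t + 2))

/-- `X a b c d k n i` is the entry `x_{i+1}` of the sequence `x^{(n)}` (for `n ≥ 1`,
`0 ≤ i < 2^n`). -/
noncomputable def X (a b c d : ℝ) (k : ℕ → ℝ) (n i : ℕ) : ℝ :=
  (seqXY a b c d k (n - 1) i).1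

/-- `Y a b c d k n i` is the entry `y_{i+1}` of the sequence `y^{(n)}` (for `n ≥ 1`,
`0 ≤ i < 2^n`). -/
noncomputable def Y (a b c d : ℝ) (k : ℕ → ℝ) (n i : ℕ) : ℝ :=
  (seqXY a b c d k (n - 1) i).2

noncomputable def Dd (a b c d : ℝ) (k : ℕ → ℝ) (t p : ℕ) : ℝ :=
  ∑ i ∈ Finset.range (2 ^ (t + 1)),
    ((seqXY a b c d k t i).1 ^ p - (seqXY a b c d k t i).2 ^ p)

lemma seqXY_low (a b c d : ℝ) (k : ℕ → ℝ) (t i : ℕ) (hi : i < 2 ^ (t + 1)) :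
    seqXY a b c d k (t + 1) i = seqXY a b c d k t i := by
  rw [seqXY, if_pos hi]

lemma seqXY_high (a b c d : ℝ) (k : ℕ → ℝ) (t i : ℕ) :
    seqXY a b c d k (t + 1) (2 ^ (t + 1) + i) =
      ((seqXY a b c d k t i).2 + k (t + 2), (seqXY a b c d k t i).1 + k (t + 2)) := by
  rw [seqXY, if_neg (by omega)]
  simp [Nat.add_sub_cancel_left]

lemma Dd_eq_zero (a b c d : ℝ) (h : a + b = c + d) (k : ℕ → ℝ) :
    ∀ t p, p ≤ t + 1 → Dd a b c d k t p = 0 := by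
  intro t
  induction t with
  | zero =>
    intro p hp
    interval_cases p
    · simp [Dd]
    · simp [Dd, seqXY, Finset.sum_range_succ]
      linarith
  | succ t ih =>
    intro p hp
    have key : Dd a b c d k (t + 1) p
        = Dd a b c d k t p - ∑ j ∈ Finset.range (p + 1),
            (p.choose j : ℝ) * k (t + 2) ^ (p - j) * Dd a b c d k t j := by
      have hsplit : (2 : ℕ) ^ (t + 1 + 1) = 2 ^ (t + 1) + 2 ^ (t + 1) := by ring
      rw [Dd, hsplit, Finset.sum_range_add]
      have h1 : ∑ i ∈ Finset.range (2 ^ (t + 1)),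
          ((seqXY a b c d k (t + 1) i).1 ^ p - (seqXY a b c d k (t + 1) i).2 ^ p)
          = Dd a b c d k t p := by
        apply Finset.sum_congr rfl
        intro i hi
        rw [seqXY_low a b c d k t i (Finset.mem_range.mp hi)]
      have h2 : ∑ i ∈ Finset.range (2 ^ (t + 1)),
          ((seqXY a b c d k (t + 1) (2 ^ (t + 1) + i)).1 ^ p
            - (seqXY a b c d k (t + 1) (2 ^ (t + 1) + i)).2 ^ p)
          = - ∑ j ∈ Finset.range (p + 1),
            (p.choose j : ℝ) * k (t + 2) ^ (p - j) * Dd a b c d k t j := by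
        have : ∀ i ∈ Finset.range (2 ^ (t + 1)),
            (seqXY a b c d k (t + 1) (2 ^ (t + 1) + i)).1 ^ p
              - (seqXY a b c d k (t + 1) (2 ^ (t + 1) + i)).2 ^ p
            = ∑ j ∈ Finset.range (p + 1),
              (p.choose j : ℝ) * k (t + 2) ^ (p - j) *
                ((seqXY a b c d k t i).2 ^ j - (seqXY a b c d k t i).1 ^ j) := by
          intro i _
          rw [seqXY_high]
          simp only
          rw [add_pow, add_pow, ← Finset.sum_sub_distrib]
          apply Finset.sum_congr rfl
          intro j _
          ring
        rw [Finset.sum_congr rfl this, Finset.sum_comm, ← Finset.sum_neg_distrib]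
        apply Finset.sum_congr rfl
        intro j _
        rw [Dd, Finset.mul_sum, ← Finset.sum_neg_distrib]
        apply Finset.sum_congr rfl
        intro i _
        ring
      rw [h1, h2]
      ring
    have hz : ∀ j ∈ Finset.range p,
        (p.choose j : ℝ) * k (t + 2) ^ (p - j) * Dd a b c d k t j = 0 := by
      intro j hj
      rw [ih j (by have := Finset.mem_range.mp hj; omega)]
      ring
    rw [key, Finset.sum_range_succ, Finset.sum_eq_zero hz]
    simp

theorem sum_nth_powers_eq (a b c d : ℝ) (h : a + b = c + d)
    (n : ℕ) (hn : 1 ≤ n) (k : ℕ → ℝ) :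
    ∑ i ∈ Finset.range (2 ^ n), X a b c d k n i ^ n =
      ∑ i ∈ Finset.range (2 ^ n), Y a b c d k n i ^ n := by
  have hD := Dd_eq_zero a b c d h k (n - 1) n (by omega)
  have hpow : n - 1 + 1 = n := by omega
  rw [Dd, hpow, Finset.sum_sub_distrib] at hD
  have := sub_eq_zero.mp hD
  simpa [X, Y] using this
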